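/- For every infinite burger stack s, every integer n ≥ 1, and every integer m ≥ 1, the events {the top burger of s is a cheeseburger} ∩ {T > m², |J_T| = n} ∩ E and E*_n ∩ {T*_{θ0,n} > m²} coincide (they are the same subset of the sample space of the i.i.d. sequence (X_i)_{i≥1} under P^{0,s}). -/

import Mathlib

open MeasureTheory ProbabilityTheory
open scoped ENNReal ENat

namespace FKPaper

/-- The alphabet `Θ = {h, c, H, C, F}`: `pH`/`pC` are hamburger/cheeseburger productions,
`oH`/`oC`/`oF` are the orders `H`, `C`, `F`. -/
inductive Sym : Type
  | pH | pC | oH | oC | oF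
  deriving DecidableEq

instance : Fintype Sym :=
  ⟨{Sym.pH, Sym.pC, Sym.oH, Sym.oC, Sym.oF}, by intro x; cases x <;> simp⟩

instance : MeasurableSpace Sym := ⊤

/-- The single-symbol law `μ_p`: `muP p a` is the probability of symbol `a`. -/
noncomputable def muP (p : ℝ) : Sym → ℝ≥0∞
  | Sym.pH => ENNReal.ofReal (1/4)
  | Sym.pC => ENNReal.ofReal (1/4)
  | Sym.oH => ENNReal.ofReal ((1-p)/4)
  | Sym.oC => ENNReal.ofReal ((1-p)/4)
  | Sym.oF => ENNReal.ofReal (p/2)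

/-- Type of a stack element: `inl j` is the burger at depth `j` of the initial infinite
stack `s` (read downward from the top), `inr i` is the burger produced at time `i`;
`true` means hamburger, `false` means cheeseburger. -/
def symType (s : ℕ → Bool) (x : ℕ → Sym) : ℕ ⊕ ℕ → Bool
  | Sum.inl j => s j
  | Sum.inr i => decide (x i = Sym.pH)

/-- Push a newly produced burger (produced at time `i`) on top of the stack. -/
def push (st : ℕ → ℕ ⊕ ℕ) (i : ℕ) : ℕ → ℕ ⊕ ℕ
  | 0 => Sum.inr i
  | n+1 => st n

/-- Remove the element at depth `m` of the stack. -/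
def del (st : ℕ → ℕ ⊕ ℕ) (m : ℕ) : ℕ → ℕ ⊕ ℕ :=
  fun n => if n < m then st n else st (n+1)

open Classical in
/-- One step of the LIFO stack dynamics: reading symbol `x i`, return the new stack and
the element consumed (if any).  An `H` (resp. `C`) order consumes the topmost hamburger
(resp. cheeseburger); an `F` order consumes the topmost burger. -/
noncomputable def stackStep (s : ℕ → Bool) (x : ℕ → Sym) (st : ℕ → ℕ ⊕ ℕ) (i : ℕ) :
    (ℕ → ℕ ⊕ ℕ) × Option (ℕ ⊕ ℕ) :=
  match x i with
  | Sym.pH => (push st i, none)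
  | Sym.pC => (push st i, none)
  | Sym.oF => (del st 0, some (st 0))
  | Sym.oH =>
      if h : ∃ m, symType s x (st m) = true then
        (del st (Nat.find h), some (st (Nat.find h)))
      else (st, none)
  | Sym.oC =>
      if h : ∃ m, symType s x (st m) = false then
        (del st (Nat.find h), some (st (Nat.find h)))
      else (st, none)

/-- The stack after reading `X_1, …, X_k`; initially the stack is `s` itself. -/
noncomputable def stackAt (s : ℕ → Bool) (x : ℕ → Sym) : ℕ → (ℕ → ℕ ⊕ ℕ)
  | 0 => fun j => Sum.inl j
  | k+1 => (stackStep s x (stackAt s x k) (k+1)).1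

/-- The stack element consumed at time `k` (if any). -/
noncomputable def eatenAt (s : ℕ → Bool) (x : ℕ → Sym) : ℕ → Option (ℕ ⊕ ℕ)
  | 0 => none
  | k+1 => (stackStep s x (stackAt s x k) (k+1)).2

open Classical in
/-- `T`: the first time at which the top burger of `s` is consumed (`⊤` if never). -/
noncomputable def hitT (s : ℕ → Bool) (x : ℕ → Sym) : ℕ∞ :=
  if h : ∃ k, eatenAt s x k = some (Sum.inl 0) then ((Nat.find h : ℕ) : ℕ∞) else ⊤

/-- `E`: the event that the top burger of `s` is consumed by an `F` order. -/
def Eev (s : ℕ → Bool) (x : ℕ → Sym) : Prop :=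
  ∃ k, eatenAt s x k = some (Sum.inl 0) ∧ x k = Sym.oF

open Classical in
/-- `|J_T|`: the number of orders among `X_1, …, X_T` whose match lies in `s` strictly
below its top burger. -/
noncomputable def JT (s : ℕ → Bool) (x : ℕ → Sym) : ℕ :=
  if h : ∃ k, eatenAt s x k = some (Sum.inl 0) then
    ((Finset.Icc 1 (Nat.find h)).filter
      (fun k => ∃ j, 1 ≤ j ∧ eatenAt s x k = some (Sum.inl j))).card
  else 0

/-- `θ0 = 2 arctan (1/√(1-2p))`. -/
noncomputable def theta0 (p : ℝ) : ℝ := 2 * Real.arctan (1 / Real.sqrt (1 - 2*p))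

/-- `p0 = π/(2 θ0)`. -/
noncomputable def pZero (p : ℝ) : ℝ := Real.pi / (2 * theta0 p)

end FKPaper

namespace FKPaper

/-- Increment of the burger-count walk `U` at time `i`: `(+1,0)` for a `c` production,
`(-1,0)` if the symbol consumes a cheeseburger, `(0,+1)` for an `h` production,
`(0,-1)` if the symbol consumes a hamburger. -/
noncomputable def Uinc (s : ℕ → Bool) (x : ℕ → Sym) (i : ℕ) : ℤ × ℤ :=
  if x i = Sym.pC then (1, 0)
  else if x i = Sym.pH then (0, 1)
  else
    match eatenAt s x i with
    | some e => if symType s x e then (0, -1) else (-1, 0)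
    | none => (0, 0)

/-- The walk `U_k ∈ ℤ²`, `U_0 = (0,0)`. -/
noncomputable def Uwalk (s : ℕ → Bool) (x : ℕ → Sym) : ℕ → ℤ × ℤ
  | 0 => (0, 0)
  | k+1 => Uwalk s x k + Uinc s x (k+1)

/-- `σ = √((1-p)/2)`. -/
noncomputable def sigmaP (p : ℝ) : ℝ := Real.sqrt ((1-p)/2)

/-- The linear map `Λ` with matrix `(1/σ)·[[1, cos θ0],[0, sin θ0]]`, viewed as a map
`ℤ² → ℂ ≅ ℝ²`. -/
noncomputable def Lam (p : ℝ) (u : ℤ × ℤ) : ℂ :=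
  ((((u.1 : ℝ) + (u.2 : ℝ) * Real.cos (theta0 p)) / sigmaP p : ℝ) : ℂ)
    + ((((u.2 : ℝ) * Real.sin (theta0 p)) / sigmaP p : ℝ) : ℂ) * Complex.I

/-- The walk `V_k = Λ(U_k)`, started at the origin. -/
noncomputable def Vwalk (p : ℝ) (s : ℕ → Bool) (x : ℕ → Sym) (k : ℕ) : ℂ :=
  Lam p (Uwalk s x k)

/-- `v0 = Λ(0,1)`. -/
noncomputable def vZero (p : ℝ) : ℂ := Lam p (0, 1)

/-- The cone `C(θ) = {z : z = 0 or arg z ∈ [0,θ]}`. -/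
def coneC (θ : ℝ) : Set ℂ := {z | z = 0 ∨ (0 ≤ z.arg ∧ z.arg ≤ θ)}

/-- The translated cone `C_n(θ0) = C(θ0) - n·v0`. -/
def coneCn (p : ℝ) (n : ℕ) : Set ℂ := {z | z + (n : ℂ) * vZero p ∈ coneC (theta0 p)}

open Classical in
/-- `T*_{θ0,n}`: the first time `k ≥ 1` at which `V_k ∉ C_n(θ0)` (`⊤` if never). -/
noncomputable def TstarN (p : ℝ) (s : ℕ → Bool) (x : ℕ → Sym) (n : ℕ) : ℕ∞ :=
  if h : ∃ k, 1 ≤ k ∧ Vwalk p s x k ∉ coneCn p n then ((Nat.find h : ℕ) : ℕ∞) else ⊤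

/-- `E*_n`: the top burger of `s` is a cheeseburger, the walk leaves `C_n(θ0)` for the
first time (at time `T*_{θ0,n}`) from the tip `-n·v0`, and the symbol read at that time
is an `F`. -/
def EstarN (p : ℝ) (s : ℕ → Bool) (x : ℕ → Sym) (n : ℕ) : Prop :=
  s 0 = false ∧
  ∃ k, 1 ≤ k ∧ Vwalk p s x k ∉ coneCn p n ∧
    (∀ j, 1 ≤ j → j < k → Vwalk p s x j ∈ coneCn p n) ∧
    Vwalk p s x (k-1) = -((n : ℂ) * vZero p) ∧ x k = Sym.oF

open Classical in
/-- `T⁺_r`: the first time `k ≥ 1` with `|V_k| ≥ r` (`⊤` if never). -/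
noncomputable def Tplus (p : ℝ) (s : ℕ → Bool) (x : ℕ → Sym) (r : ℝ) : ℕ∞ :=
  if h : ∃ k, 1 ≤ k ∧ r ≤ ‖Vwalk p s x k‖ then ((Nat.find h : ℕ) : ℕ∞) else ⊤

end FKPaper

namespace FKPaper

variable {p : ℝ}

lemma sigmaP_pos (hp : p ∈ Set.Ioo (0:ℝ) (1/2)) : 0 < sigmaP p := by
  have : (0:ℝ) < (1-p)/2 := by nlinarith [hp.1, hp.2]
  exact Real.sqrt_pos.mpr this

lemma theta0_pos (hp : p ∈ Set.Ioo (0:ℝ) (1/2)) : 0 < theta0 p := by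
  have h1 : (0:ℝ) < 1 - 2*p := by nlinarith [hp.2]
  have h2 : 0 < Real.sqrt (1-2*p) := Real.sqrt_pos.mpr h1
  have : 0 < Real.arctan (1 / Real.sqrt (1-2*p)) := by
    have := Real.arctan_strictMono (show (0:ℝ) < 1 / Real.sqrt (1-2*p) by positivity)
    simpa using this
  unfold theta0; linarith

lemma theta0_lt_pi (hp : p ∈ Set.Ioo (0:ℝ) (1/2)) : theta0 p < Real.pi := by
  have := Real.arctan_lt_pi_div_two (1 / Real.sqrt (1-2*p))
  unfold theta0; linarith

lemma sin_theta0_pos (hp : p ∈ Set.Ioo (0:ℝ) (1/2)) : 0 < Real.sin (theta0 p) :=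
  Real.sin_pos_of_pos_of_lt_pi (theta0_pos hp) (theta0_lt_pi hp)

lemma Lam_re (u : ℤ × ℤ) :
    (Lam p u).re = ((u.1 : ℝ) + (u.2 : ℝ) * Real.cos (theta0 p)) / sigmaP p := by
  simp only [Lam, Complex.add_re, Complex.ofReal_re, Complex.mul_re, Complex.I_re,
    Complex.I_im, Complex.ofReal_im]
  ring

lemma Lam_im (u : ℤ × ℤ) :
    (Lam p u).im = ((u.2 : ℝ) * Real.sin (theta0 p)) / sigmaP p := by
  simp only [Lam, Complex.add_im, Complex.ofReal_im, Complex.mul_im, Complex.I_re,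
    Complex.I_im, Complex.ofReal_re]
  ring

lemma Lam_add (u v : ℤ × ℤ) : Lam p (u + v) = Lam p u + Lam p v := by
  apply Complex.ext
  · rw [Complex.add_re, Lam_re, Lam_re, Lam_re, Prod.fst_add, Prod.snd_add]
    push_cast; ring
  · rw [Complex.add_im, Lam_im, Lam_im, Lam_im, Prod.snd_add]
    push_cast; ring

lemma nsmul_vZero (n : ℕ) : (n : ℂ) * vZero p = Lam p (0, (n:ℤ)) := by
  apply Complex.ext
  · rw [Complex.mul_re, Complex.natCast_re, Complex.natCast_im, vZero, Lam_re, Lam_re]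
    push_cast; ring
  · rw [Complex.mul_im, Complex.natCast_re, Complex.natCast_im, vZero, Lam_im, Lam_im]
    push_cast; ring

/-- Membership in the cone `C(θ)` in coordinates, for `0 < θ < π`. -/
lemma mem_coneC_iff (hθ : 0 < θ) (hθπ : θ < Real.pi) (z : ℂ) :
    z ∈ coneC θ ↔ (0 ≤ z.im ∧ z.im * Real.cos θ - z.re * Real.sin θ ≤ 0) := by
  rcases eq_or_ne z 0 with rfl | hz
  · simp [coneC]
  · have habs : 0 < ‖z‖ := by simpa using hz
    have him : z.im = Real.sin z.arg * ‖z‖ := by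
      rw [Complex.sin_arg]; field_simp
    have hre : z.re = Real.cos z.arg * ‖z‖ := by
      rw [Complex.cos_arg hz]; field_simp
    have key : z.im * Real.cos θ - z.re * Real.sin θ
        = Real.sin (z.arg - θ) * ‖z‖ := by
      rw [him, hre, Real.sin_sub]; ring
    constructor
    · rintro (rfl | ⟨h0, h1⟩)
      · simp at hz
      · refine ⟨Complex.arg_nonneg_iff.mp h0, ?_⟩
        rw [key]
        have : Real.sin (z.arg - θ) ≤ 0 :=
          Real.sin_nonpos_of_nonpos_of_neg_pi_le (by linarith)
            (by have := Complex.arg_le_pi z; linarith [Complex.neg_pi_lt_arg z])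
        exact mul_nonpos_of_nonpos_of_nonneg this habs.le
    · rintro ⟨h0, h1⟩
      right
      have harg0 : 0 ≤ z.arg := Complex.arg_nonneg_iff.mpr h0
      refine ⟨harg0, ?_⟩
      by_contra hlt
      push_neg at hlt
      have hsin : 0 < Real.sin (z.arg - θ) :=
        Real.sin_pos_of_pos_of_lt_pi (by linarith)
          (by have := Complex.arg_le_pi z; linarith)
      rw [key] at h1
      nlinarith
  
lemma Lam_mem_coneC_iff (hp : p ∈ Set.Ioo (0:ℝ) (1/2)) (u : ℤ × ℤ) :
    Lam p u ∈ coneC (theta0 p) ↔ 0 ≤ u.1 ∧ 0 ≤ u.2 := by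
  rw [mem_coneC_iff (theta0_pos hp) (theta0_lt_pi hp), Lam_im, Lam_re]
  have hσ := sigmaP_pos hp
  have hs := sin_theta0_pos hp
  constructor
  · rintro ⟨h0, h1⟩
    have hb : (0:ℝ) ≤ (u.2 : ℝ) := by
      by_contra hneg
      push_neg at hneg
      have : (u.2:ℝ) * Real.sin (theta0 p) / sigmaP p < 0 :=
        div_neg_of_neg_of_pos (mul_neg_of_neg_of_pos hneg hs) hσ
      linarith
    have key : (u.2 : ℝ) * Real.sin (theta0 p) / sigmaP p * Real.cos (theta0 p)
        - ((u.1 : ℝ) + (u.2:ℝ) * Real.cos (theta0 p)) / sigmaP p * Real.sin (theta0 p)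
        = -(u.1 : ℝ) * Real.sin (theta0 p) / sigmaP p := by field_simp; ring
    rw [key] at h1
    have ha : (0:ℝ) ≤ (u.1 : ℝ) := by
      by_contra hn
      push_neg at hn
      have h2 : 0 < -(u.1:ℝ) := by linarith
      have : 0 < -(u.1:ℝ) * Real.sin (theta0 p) / sigmaP p :=
        div_pos (mul_pos h2 hs) hσ
      linarith
    exact ⟨by exact_mod_cast ha, by exact_mod_cast hb⟩
  · rintro ⟨ha, hb⟩
    have ha' : (0:ℝ) ≤ (u.1 : ℝ) := by exact_mod_cast ha
    have hb' : (0:ℝ) ≤ (u.2 : ℝ) := by exact_mod_cast hb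
    constructor
    · exact div_nonneg (mul_nonneg hb' hs.le) hσ.le
    · have key : (u.2 : ℝ) * Real.sin (theta0 p) / sigmaP p * Real.cos (theta0 p)
        - ((u.1 : ℝ) + (u.2:ℝ) * Real.cos (theta0 p)) / sigmaP p * Real.sin (theta0 p)
        = -(u.1 : ℝ) * Real.sin (theta0 p) / sigmaP p := by field_simp; ring
      rw [key]
      have h3 : 0 ≤ (u.1 : ℝ) * Real.sin (theta0 p) / sigmaP p :=
        div_nonneg (mul_nonneg ha' hs.le) hσ.le
      have h4 : -(u.1:ℝ) * Real.sin (theta0 p) / sigmaP p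
          = -((u.1:ℝ) * Real.sin (theta0 p) / sigmaP p) := by ring
      rw [h4]; linarith

lemma Lam_inj (hp : p ∈ Set.Ioo (0:ℝ) (1/2)) {u v : ℤ × ℤ}
    (h : Lam p u = Lam p v) : u = v := by
  have hσ := sigmaP_pos hp
  have hs := sin_theta0_pos hp
  have him := congrArg Complex.im h
  have hre := congrArg Complex.re h
  rw [Lam_im, Lam_im] at him
  rw [Lam_re, Lam_re] at hre
  have h2 : (u.2 : ℝ) = (v.2 : ℝ) := by
    field_simp at him
    exact_mod_cast him
  have hre' : (u.1:ℝ) + (u.2:ℝ) * Real.cos (theta0 p)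
      = (v.1:ℝ) + (v.2:ℝ) * Real.cos (theta0 p) := by
    field_simp at hre; linarith
  have h1 : (u.1 : ℝ) = (v.1 : ℝ) := by rw [h2] at hre'; linarith
  have e1 : u.1 = v.1 := by exact_mod_cast h1
  have e2 : u.2 = v.2 := by exact_mod_cast h2
  exact Prod.ext e1 e2

end FKPaper

namespace FKPaper

variable {s : ℕ → Bool} {x : ℕ → Sym}

/-! ### Basic unfoldings -/

lemma stackAt_succ (k : ℕ) :
    stackAt s x (k+1) = (stackStep s x (stackAt s x k) (k+1)).1 := rfl

lemma eatenAt_succ (k : ℕ) :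
    eatenAt s x (k+1) = (stackStep s x (stackAt s x k) (k+1)).2 := rfl

lemma eatenAt_zero : eatenAt s x 0 = none := rfl

lemma Uwalk_succ (k : ℕ) :
    Uwalk s x (k+1) = Uwalk s x k + Uinc s x (k+1) := rfl

lemma symType_inl (j : ℕ) : symType s x (Sum.inl j) = s j := rfl

lemma symType_inr (i : ℕ) : symType s x (Sum.inr i) = decide (x i = Sym.pH) := rfl

lemma stackStep_pH {i : ℕ} (st : ℕ → ℕ ⊕ ℕ) (h : x i = Sym.pH) :
    stackStep s x st i = (push st i, none) := by unfold stackStep; rw [h]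

lemma stackStep_pC {i : ℕ} (st : ℕ → ℕ ⊕ ℕ) (h : x i = Sym.pC) :
    stackStep s x st i = (push st i, none) := by unfold stackStep; rw [h]

lemma stackStep_oF {i : ℕ} (st : ℕ → ℕ ⊕ ℕ) (h : x i = Sym.oF) :
    stackStep s x st i = (del st 0, some (st 0)) := by unfold stackStep; rw [h]

open Classical in
lemma stackStep_oH {i : ℕ} (st : ℕ → ℕ ⊕ ℕ) (h : x i = Sym.oH) :
    stackStep s x st i =
      if hex : ∃ m, symType s x (st m) = true then
        (del st (Nat.find hex), some (st (Nat.find hex)))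
      else (st, none) := by unfold stackStep; rw [h]

open Classical in
lemma stackStep_oC {i : ℕ} (st : ℕ → ℕ ⊕ ℕ) (h : x i = Sym.oC) :
    stackStep s x st i =
      if hex : ∃ m, symType s x (st m) = false then
        (del st (Nat.find hex), some (st (Nat.find hex)))
      else (st, none) := by unfold stackStep; rw [h]

/-! ### Uinc computations -/

lemma Uinc_pC {i : ℕ} (h : x i = Sym.pC) : Uinc s x i = (1, 0) := by
  simp [Uinc, h]

lemma Uinc_pH {i : ℕ} (h : x i = Sym.pH) : Uinc s x i = (0, 1) := by
  simp [Uinc, h]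

lemma Uinc_eat_true {i : ℕ} {e : ℕ ⊕ ℕ} (h1 : x i ≠ Sym.pC) (h2 : x i ≠ Sym.pH)
    (he : eatenAt s x i = some e) (ht : symType s x e = true) :
    Uinc s x i = (0, -1) := by
  simp [Uinc, h1, h2, he, ht]

lemma Uinc_eat_false {i : ℕ} {e : ℕ ⊕ ℕ} (h1 : x i ≠ Sym.pC) (h2 : x i ≠ Sym.pH)
    (he : eatenAt s x i = some e) (ht : symType s x e = false) :
    Uinc s x i = (-1, 0) := by
  simp [Uinc, h1, h2, he, ht]

lemma Uinc_none {i : ℕ} (h1 : x i ≠ Sym.pC) (h2 : x i ≠ Sym.pH)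
    (he : eatenAt s x i = none) : Uinc s x i = (0, 0) := by
  simp [Uinc, h1, h2, he]

/-! ### The abstract stack shape -/

/-- Stack consisting of the produced burgers `P` (top first) sitting on top of the
remaining part of `s`, enumerated by `g`. -/
def stk (g : ℕ → ℕ) : List ℕ → ℕ → ℕ ⊕ ℕ
  | [], n => Sum.inl (g n)
  | i :: _, 0 => Sum.inr i
  | _ :: P, n+1 => stk g P n

lemma push_stk (g : ℕ → ℕ) (P : List ℕ) (i : ℕ) :
    push (stk g P) i = stk g (i :: P) := by
  funext n; cases n <;> rfl

lemma stk_ge (g : ℕ → ℕ) : ∀ (P : List ℕ) (m : ℕ), P.length ≤ m →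
    stk g P m = Sum.inl (g (m - P.length)) := by
  intro P
  induction P with
  | nil => intro m _; rfl
  | cons i P ih =>
      intro m hm
      cases m with
      | zero => simp at hm
      | succ m => simpa [stk] using ih m (by simpa using hm)

lemma stk_inr_mem (g : ℕ → ℕ) : ∀ (P : List ℕ) (m i : ℕ),
    stk g P m = Sum.inr i → i ∈ P := by
  intro P
  induction P with
  | nil => intro m i h; simp [stk] at h
  | cons a P ih =>
      intro m i h
      cases m with
      | zero => cases h; exact List.mem_cons_self
      | succ m => exact List.mem_cons_of_mem _ (ih m i h)

lemma stk_lt (g : ℕ → ℕ) : ∀ (P : List ℕ) (m : ℕ), m < P.length →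
    ∃ i, i ∈ P ∧ stk g P m = Sum.inr i := by
  intro P
  induction P with
  | nil => intro m h; simp at h
  | cons a P ih =>
      intro m hm
      cases m with
      | zero => exact ⟨a, List.mem_cons_self, rfl⟩
      | succ m =>
          obtain ⟨i, hi, he⟩ := ih m (by simpa using hm)
          exact ⟨i, List.mem_cons_of_mem _ hi, he⟩

lemma stk_mem (g : ℕ → ℕ) : ∀ (P : List ℕ), ∀ i ∈ P,
    ∃ m, m < P.length ∧ stk g P m = Sum.inr i := by
  intro P
  induction P with
  | nil => intro i hi; simp at hi
  | cons a P ih =>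
      intro i hi
      rcases List.mem_cons.mp hi with rfl | hi
      · exact ⟨0, by simp, rfl⟩
      · obtain ⟨m, hm, he⟩ := ih i hi
        exact ⟨m+1, by simpa using hm, he⟩

lemma del_stk_zero (g : ℕ → ℕ) (i : ℕ) (P : List ℕ) :
    del (stk g (i :: P)) 0 = stk g P := by
  funext n; simp [del, stk]

lemma del_stk_succ (g : ℕ → ℕ) (i : ℕ) (P : List ℕ) (m : ℕ) :
    del (stk g (i :: P)) (m+1) = push (del (stk g P) m) i := by
  funext n
  cases n with
  | zero => simp [del, push, stk]
  | succ n =>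
      simp only [del, push]
      by_cases h : n < m
      · rw [if_pos (by omega), if_pos h]; rfl
      · rw [if_neg (by omega), if_neg h]; rfl

lemma del_stk_lt (g : ℕ → ℕ) : ∀ (P : List ℕ) (m : ℕ), m < P.length →
    ∃ i Q, i ∈ P ∧ stk g P m = Sum.inr i ∧ del (stk g P) m = stk g Q ∧
      (∀ q : ℕ → Bool, P.countP q = Q.countP q + if q i then 1 else 0) ∧
      (∀ j ∈ Q, j ∈ P) := by
  intro P
  induction P with
  | nil => intro m h; simp at h
  | cons a P ih =>
      intro m hm
      cases m with
      | zero =>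
          refine ⟨a, P, List.mem_cons_self, rfl, del_stk_zero g a P, ?_, ?_⟩
          · intro q; rw [List.countP_cons]
          · intro j hj; exact List.mem_cons_of_mem _ hj
      | succ m =>
          obtain ⟨i, Q, hiP, hieq, hdel, hcnt, hsub⟩ := ih m (by simpa using hm)
          refine ⟨i, a :: Q, List.mem_cons_of_mem _ hiP, hieq, ?_, ?_, ?_⟩
          · rw [del_stk_succ, hdel, push_stk]
          · intro q; rw [List.countP_cons, List.countP_cons, hcnt q]; omega
          · intro j hj
            rcases List.mem_cons.mp hj with rfl | hj
            · exact List.mem_cons_self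
            · exact List.mem_cons_of_mem _ (hsub j hj)

/-- The shift of the enumeration `g` deleting position `a`. -/
def gshift (g : ℕ → ℕ) (a : ℕ) : ℕ → ℕ := fun t => if t < a then g t else g (t+1)

lemma del_stk_ge (g : ℕ → ℕ) : ∀ (P : List ℕ) (m : ℕ), P.length ≤ m →
    del (stk g P) m = stk (gshift g (m - P.length)) P := by
  intro P
  induction P with
  | nil =>
      intro m _
      funext n
      simp only [del, stk, gshift, Nat.sub_zero]
      by_cases h : n < m <;> simp [h]
  | cons a P ih =>
      intro m hm
      cases m with
      | zero => simp at hm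
      | succ m =>
          rw [del_stk_succ, ih m (by simpa using hm), push_stk,
            show m + 1 - (a::P).length = m - P.length from by simp]

lemma gshift_smono {g : ℕ → ℕ} (hg : StrictMono g) (a : ℕ) :
    StrictMono (gshift g a) := by
  intro t1 t2 h
  unfold gshift
  by_cases h1 : t1 < a
  · by_cases h2 : t2 < a
    · rw [if_pos h1, if_pos h2]; exact hg h
    · rw [if_pos h1, if_neg h2]; exact hg (by omega)
  · have h2 : ¬ t2 < a := by omega
    rw [if_neg h1, if_neg h2]; exact hg (by omega)

lemma gshift_zero {g : ℕ → ℕ} {a : ℕ} (ha : 1 ≤ a) : gshift g a 0 = g 0 := by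
  simp only [gshift]
  rw [if_pos (by omega)]

lemma gshift_delham {g : ℕ → ℕ} (hg : StrictMono g)
    (hdel : ∀ j, (∀ t, g t ≠ j) → s j = true) {a : ℕ} (hsa : s (g a) = true) :
    ∀ j, (∀ t, gshift g a t ≠ j) → s j = true := by
  intro j hj
  by_cases hja : j = g a
  · rw [hja]; exact hsa
  · apply hdel
    intro t ht
    rcases lt_trichotomy t a with h | h | h
    · exact hj t (by rw [gshift, if_pos h]; exact ht)
    · exact hja (by rw [← ht, h])
    · have : t - 1 ≥ a := by omega
      apply hj (t-1)
      rw [gshift, if_neg (by omega)]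
      rw [show t - 1 + 1 = t by omega]
      exact ht

/-! ### The J-counter -/

open Classical in
/-- Number of times in `[1,k]` at which a burger of `s` strictly below the top was
consumed. -/
noncomputable def Jcount (s : ℕ → Bool) (x : ℕ → Sym) (k : ℕ) : ℕ :=
  ((Finset.Icc 1 k).filter
    (fun t => ∃ j, 1 ≤ j ∧ eatenAt s x t = some (Sum.inl j))).card

lemma Jcount_zero : Jcount s x 0 = 0 := by
  simp [Jcount]

open Classical in
lemma Jcount_succ (k : ℕ) :
    Jcount s x (k+1) = Jcount s x k +
      (if ∃ j, 1 ≤ j ∧ eatenAt s x (k+1) = some (Sum.inl j) then 1 else 0) := by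
  classical
  unfold Jcount
  rw [show Finset.Icc 1 (k+1) = insert (k+1) (Finset.Icc 1 k) from
    (Finset.insert_Icc_right_eq_Icc_add_one (by omega)).symm]
  rw [Finset.filter_insert]
  by_cases h : ∃ j, 1 ≤ j ∧ eatenAt s x (k+1) = some (Sum.inl j)
  · rw [if_pos h, if_pos h, Finset.card_insert_of_notMem (by simp)]
  · rw [if_neg h, if_neg h, add_zero]

lemma Jcount_succ_none {k : ℕ}
    (h : ∀ j, 1 ≤ j → eatenAt s x (k+1) ≠ some (Sum.inl j)) :
    Jcount s x (k+1) = Jcount s x k := by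
  rw [Jcount_succ, if_neg, add_zero]
  rintro ⟨j, hj, he⟩
  exact h j hj he

lemma Jcount_succ_event {k j : ℕ} (hj : 1 ≤ j)
    (he : eatenAt s x (k+1) = some (Sum.inl j)) :
    Jcount s x (k+1) = Jcount s x k + 1 := by
  rw [Jcount_succ, if_pos ⟨j, hj, he⟩]

lemma Jcount_mono {k l : ℕ} (h : k ≤ l) : Jcount s x k ≤ Jcount s x l := by
  classical
  apply Finset.card_le_card
  apply Finset.filter_subset_filter
  exact Finset.Icc_subset_Icc_right h

/-! ### The invariant -/

/-- Number of cheeseburger productions in `P`. -/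
def cCount (x : ℕ → Sym) (P : List ℕ) : ℕ := P.countP (fun i => decide (x i = Sym.pC))

/-- Number of hamburger productions in `P`. -/
def hCount (x : ℕ → Sym) (P : List ℕ) : ℕ := P.countP (fun i => decide (x i = Sym.pH))

/-- The invariant holding as long as the top burger of `s` has not been consumed
(assuming `s 0 = false`). -/
structure Good (s : ℕ → Bool) (x : ℕ → Sym) (k : ℕ) (P : List ℕ) (g : ℕ → ℕ) :
    Prop where
  stack_eq : stackAt s x k = stk g P
  smono : StrictMono g
  g0 : g 0 = 0
  delham : ∀ j, (∀ t, g t ≠ j) → s j = true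
  prodP : ∀ i ∈ P, x i = Sym.pH ∨ x i = Sym.pC
  walk : Uwalk s x k =
    ((cCount x P : ℤ), (hCount x P : ℤ) - (Jcount s x k : ℤ))

lemma good_zero : Good s x 0 (List.nil) id := by
  refine ⟨?_, fun a b h => h, rfl, ?_, ?_, ?_⟩
  · funext n; rfl
  · intro j hj; exact absurd rfl (hj j)
  · intro i hi; simp at hi
  · simp [Uwalk, cCount, hCount, Jcount_zero]

end FKPaper

namespace FKPaper

variable {s : ℕ → Bool} {x : ℕ → Sym}

/-- One step of the invariant, in the regime where the top burger of `s` is not yet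
consumed. -/
lemma good_step (hs : s 0 = false) {k : ℕ} {P : List ℕ} {g : ℕ → ℕ}
    (G : Good s x k P g) (hreg : eatenAt s x (k+1) ≠ some (Sum.inl 0)) :
    ∃ P' g', Good s x (k+1) P' g' := by
  classical
  have hst := G.stack_eq
  cases hx : x (k+1) with
  | pH =>
      have he : eatenAt s x (k+1) = none := by
        rw [eatenAt_succ, hst, stackStep_pH _ hx]
      refine ⟨(k+1) :: P, g, ⟨?_, G.smono, G.g0, G.delham, ?_, ?_⟩⟩
      · rw [stackAt_succ, hst, stackStep_pH _ hx]; exact push_stk g P (k+1)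
      · intro i hi
        rcases List.mem_cons.mp hi with rfl | hi
        · exact Or.inl hx
        · exact G.prodP i hi
      · have hj : Jcount s x (k+1) = Jcount s x k :=
          Jcount_succ_none (fun j _ hee => by rw [he] at hee; cases hee)
        have hc : cCount x ((k+1) :: P) = cCount x P := by
          simp [cCount, List.countP_cons, hx]
        have hh : hCount x ((k+1) :: P) = hCount x P + 1 := by
          simp [hCount, List.countP_cons, hx]
        rw [Uwalk_succ, G.walk, Uinc_pH hx, hc, hh, hj]
        apply Prod.ext <;> simp <;> ring
  | pC =>
      have he : eatenAt s x (k+1) = none := by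
        rw [eatenAt_succ, hst, stackStep_pC _ hx]
      refine ⟨(k+1) :: P, g, ⟨?_, G.smono, G.g0, G.delham, ?_, ?_⟩⟩
      · rw [stackAt_succ, hst, stackStep_pC _ hx]; exact push_stk g P (k+1)
      · intro i hi
        rcases List.mem_cons.mp hi with rfl | hi
        · exact Or.inr hx
        · exact G.prodP i hi
      · have hj : Jcount s x (k+1) = Jcount s x k :=
          Jcount_succ_none (fun j _ hee => by rw [he] at hee; cases hee)
        have hc : cCount x ((k+1) :: P) = cCount x P + 1 := by
          simp [cCount, List.countP_cons, hx]
        have hh : hCount x ((k+1) :: P) = hCount x P := by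
          simp [hCount, List.countP_cons, hx]
        rw [Uwalk_succ, G.walk, Uinc_pC hx, hc, hh, hj]
        apply Prod.ext <;> simp <;> ring
  | oF =>
      have hstep : stackStep s x (stackAt s x k) (k+1)
          = (del (stk g P) 0, some (stk g P 0)) := by
        rw [hst, stackStep_oF _ hx]
      cases P with
      | nil =>
          exfalso
          apply hreg
          rw [eatenAt_succ, hstep]
          show some (Sum.inl (g 0)) = some (Sum.inl 0)
          rw [G.g0]
      | cons i P' =>
          have he : eatenAt s x (k+1) = some (Sum.inr i) := by
            rw [eatenAt_succ, hstep]; rfl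
          have hj : Jcount s x (k+1) = Jcount s x k :=
            Jcount_succ_none (fun j _ hee => by rw [he] at hee; cases hee)
          refine ⟨P', g, ⟨?_, G.smono, G.g0, G.delham, ?_, ?_⟩⟩
          · rw [stackAt_succ, hstep]; exact del_stk_zero g i P'
          · intro i' hi'; exact G.prodP i' (List.mem_cons_of_mem _ hi')
          · rcases G.prodP i (List.mem_cons_self) with hi | hi
            · have ht : symType s x (Sum.inr i) = true := by
                rw [symType_inr, hi]; rfl
              rw [Uwalk_succ, G.walk, Uinc_eat_true (by simp [hx]) (by simp [hx]) he ht,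
                hj]
              have hc : cCount x (i :: P') = cCount x P' := by
                simp [cCount, List.countP_cons, hi]
              have hh : hCount x (i :: P') = hCount x P' + 1 := by
                simp [hCount, List.countP_cons, hi]
              rw [hc, hh]
              apply Prod.ext <;> simp <;> ring
            · have ht : symType s x (Sum.inr i) = false := by
                rw [symType_inr, hi]; rfl
              rw [Uwalk_succ, G.walk, Uinc_eat_false (by simp [hx]) (by simp [hx]) he ht,
                hj]
              have hc : cCount x (i :: P') = cCount x P' + 1 := by
                simp [cCount, List.countP_cons, hi]
              have hh : hCount x (i :: P') = hCount x P' := by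
                simp [hCount, List.countP_cons, hi]
              rw [hc, hh]
              apply Prod.ext <;> simp <;> ring
  | oC =>
      have hex : ∃ m, symType s x (stk g P m) = false :=
        ⟨P.length, by rw [stk_ge _ _ _ le_rfl, Nat.sub_self, G.g0, symType_inl]; exact hs⟩
      have hstep : stackStep s x (stackAt s x k) (k+1)
          = (del (stk g P) (Nat.find hex), some (stk g P (Nat.find hex))) := by
        rw [hst, stackStep_oC _ hx, dif_pos hex]
      have hle : Nat.find hex ≤ P.length := Nat.find_min' hex
        (by rw [stk_ge _ _ _ le_rfl, Nat.sub_self, G.g0, symType_inl]; exact hs)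
      by_cases hlt : Nat.find hex < P.length
      · obtain ⟨i, Q, hiP, hieq, hdel, hcnt, hsub⟩ := del_stk_lt g P (Nat.find hex) hlt
        have hiC : x i = Sym.pC := by
          have hspec := Nat.find_spec hex
          rw [hieq, symType_inr] at hspec
          have : x i ≠ Sym.pH := by simpa using hspec
          rcases G.prodP i hiP with h | h
          · exact absurd h this
          · exact h
        have he : eatenAt s x (k+1) = some (Sum.inr i) := by
          rw [eatenAt_succ, hstep, hieq]
        have hj : Jcount s x (k+1) = Jcount s x k :=
          Jcount_succ_none (fun j _ hee => by rw [he] at hee; cases hee)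
        refine ⟨Q, g, ⟨?_, G.smono, G.g0, G.delham, ?_, ?_⟩⟩
        · rw [stackAt_succ, hstep]; exact hdel
        · intro i' hi'; exact G.prodP i' (hsub i' hi')
        · have ht : symType s x (Sum.inr i) = false := by
            rw [symType_inr, hiC]; rfl
          rw [Uwalk_succ, G.walk, Uinc_eat_false (by simp [hx]) (by simp [hx]) he ht, hj]
          have hc : cCount x P = cCount x Q + 1 := by
            have := hcnt (fun i => decide (x i = Sym.pC))
            simpa [cCount, hiC] using this
          have hh : hCount x P = hCount x Q := by
            have := hcnt (fun i => decide (x i = Sym.pH))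
            simpa [hCount, hiC] using this
          rw [hc, hh]
          apply Prod.ext <;> simp <;> ring
      · exfalso
        apply hreg
        have heq : Nat.find hex = P.length := by omega
        rw [eatenAt_succ, hstep, heq, stk_ge _ _ _ le_rfl, Nat.sub_self, G.g0]
  | oH =>
      by_cases hex : ∃ m, symType s x (stk g P m) = true
      · have hstep : stackStep s x (stackAt s x k) (k+1)
            = (del (stk g P) (Nat.find hex), some (stk g P (Nat.find hex))) := by
          rw [hst, stackStep_oH _ hx, dif_pos hex]
        by_cases hlt : Nat.find hex < P.length
        · obtain ⟨i, Q, hiP, hieq, hdel, hcnt, hsub⟩ := del_stk_lt g P (Nat.find hex) hlt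
          have hiH : x i = Sym.pH := by
            have hspec := Nat.find_spec hex
            rw [hieq, symType_inr] at hspec
            simpa using hspec
          have he : eatenAt s x (k+1) = some (Sum.inr i) := by
            rw [eatenAt_succ, hstep, hieq]
          have hj : Jcount s x (k+1) = Jcount s x k :=
            Jcount_succ_none (fun j _ hee => by rw [he] at hee; cases hee)
          refine ⟨Q, g, ⟨?_, G.smono, G.g0, G.delham, ?_, ?_⟩⟩
          · rw [stackAt_succ, hstep]; exact hdel
          · intro i' hi'; exact G.prodP i' (hsub i' hi')
          · have ht : symType s x (Sum.inr i) = true := by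
              rw [symType_inr, hiH]; rfl
            rw [Uwalk_succ, G.walk, Uinc_eat_true (by simp [hx]) (by simp [hx]) he ht, hj]
            have hc : cCount x P = cCount x Q := by
              have := hcnt (fun i => decide (x i = Sym.pC))
              simpa [cCount, hiH] using this
            have hh : hCount x P = hCount x Q + 1 := by
              have := hcnt (fun i => decide (x i = Sym.pH))
              simpa [hCount, hiH] using this
            rw [hc, hh]
            apply Prod.ext <;> simp <;> ring
        · push_neg at hlt
          have heq : stk g P (Nat.find hex) = Sum.inl (g (Nat.find hex - P.length)) :=
            stk_ge _ _ _ hlt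
          set a := Nat.find hex - P.length with ha_def
          have hsg : s (g a) = true := by
            have hspec := Nat.find_spec hex
            rw [heq, symType_inl] at hspec
            exact hspec
          have ha : 1 ≤ a := by
            rcases Nat.eq_zero_or_pos a with h0 | h1
            · rw [h0, G.g0, hs] at hsg; cases hsg
            · exact h1
          have hgpos : 1 ≤ g a := by
            have := G.smono (show 0 < a from ha)
            rw [G.g0] at this
            omega
          have he : eatenAt s x (k+1) = some (Sum.inl (g a)) := by
            rw [eatenAt_succ, hstep, heq]
          have hj : Jcount s x (k+1) = Jcount s x k + 1 :=
            Jcount_succ_event hgpos he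
          refine ⟨P, gshift g a, ⟨?_, gshift_smono G.smono a, ?_,
            gshift_delham G.smono G.delham hsg, G.prodP, ?_⟩⟩
          · rw [stackAt_succ, hstep]; exact del_stk_ge g P (Nat.find hex) hlt
          · rw [gshift_zero ha]; exact G.g0
          · have ht : symType s x (Sum.inl (g a)) = true := by
              rw [symType_inl]; exact hsg
            rw [Uwalk_succ, G.walk, Uinc_eat_true (by simp [hx]) (by simp [hx]) he ht, hj]
            apply Prod.ext <;> simp <;> ring
      · have hstep : stackStep s x (stackAt s x k) (k+1) = (stk g P, none) := by
          rw [hst, stackStep_oH _ hx, dif_neg hex]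
        have he : eatenAt s x (k+1) = none := by rw [eatenAt_succ, hstep]
        have hj : Jcount s x (k+1) = Jcount s x k :=
          Jcount_succ_none (fun j _ hee => by rw [he] at hee; cases hee)
        refine ⟨P, g, ⟨?_, G.smono, G.g0, G.delham, G.prodP, ?_⟩⟩
        · rw [stackAt_succ, hstep]
        · rw [Uwalk_succ, G.walk, Uinc_none (by simp [hx]) (by simp [hx]) he, hj]
          apply Prod.ext <;> simp <;> ring

/-- The invariant holds as long as the top burger of `s` has not been consumed. -/
lemma good_upto (hs : s 0 = false) (K : ℕ)
    (hreg : ∀ t, t ≤ K → eatenAt s x t ≠ some (Sum.inl 0)) :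
    ∃ P g, Good s x K P g := by
  induction K with
  | zero => exact ⟨List.nil, id, good_zero⟩
  | succ k ih =>
      obtain ⟨P, g, G⟩ := ih (fun t ht => hreg t (by omega))
      obtain ⟨P', g', G'⟩ := good_step hs G (hreg (k+1) le_rfl)
      exact ⟨P', g', G'⟩

end FKPaper

namespace FKPaper

variable {s : ℕ → Bool} {x : ℕ → Sym}

lemma stk_inl (g : ℕ → ℕ) : ∀ (P : List ℕ) (m j : ℕ),
    stk g P m = Sum.inl j → P.length ≤ m ∧ g (m - P.length) = j := by
  intro P
  induction P with
  | nil =>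
      intro m j h
      refine ⟨Nat.zero_le m, ?_⟩
      have : g m = j := by injection h
      simpa using this
  | cons a P ih =>
      intro m j h
      cases m with
      | zero => cases h
      | succ m =>
          obtain ⟨h1, h2⟩ := ih m j h
          exact ⟨by simpa using h1, by simpa using h2⟩

lemma stk_eq_inl_zero {g : ℕ → ℕ} {P : List ℕ} {m : ℕ} (hg : StrictMono g)
    (hg0 : g 0 = 0) (h : stk g P m = Sum.inl 0) : m = P.length := by
  obtain ⟨hlen, heq⟩ := stk_inl g P m 0 h
  have : m - P.length = 0 := hg.injective (heq.trans hg0.symm)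
  omega

/-- If the top burger of `s` (a cheeseburger) is consumed at time `k+1`, the first
coordinate of the walk becomes `-1`. -/
lemma eat_top_walk (hs : s 0 = false) {k : ℕ} {P : List ℕ} {g : ℕ → ℕ}
    (G : Good s x k P g) (heat : eatenAt s x (k+1) = some (Sum.inl 0)) :
    (Uwalk s x (k+1)).1 = -1 := by
  classical
  have hst := G.stack_eq
  have htop : symType s x (Sum.inl (0:ℕ)) = false := by rw [symType_inl]; exact hs
  cases hx : x (k+1) with
  | pH => rw [eatenAt_succ, hst, stackStep_pH _ hx] at heat; cases heat
  | pC => rw [eatenAt_succ, hst, stackStep_pC _ hx] at heat; cases heat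
  | oF =>
      cases P with
      | cons i P' =>
          rw [eatenAt_succ, hst, stackStep_oF _ hx] at heat
          cases heat
      | nil =>
          rw [Uwalk_succ, G.walk,
            Uinc_eat_false (by simp [hx]) (by simp [hx]) heat htop]
          simp [cCount]
  | oC =>
      have hex : ∃ m, symType s x (stk g P m) = false :=
        ⟨P.length, by rw [stk_ge _ _ _ le_rfl, Nat.sub_self, G.g0, symType_inl]; exact hs⟩
      have heat' : stk g P (Nat.find hex) = Sum.inl 0 := by
        rw [eatenAt_succ, hst, stackStep_oC _ hx, dif_pos hex] at heat
        exact Option.some.inj heat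
      have hfind : Nat.find hex = P.length := stk_eq_inl_zero G.smono G.g0 heat'
      have hcP : cCount x P = 0 := by
        rw [cCount, List.countP_eq_zero]
        intro i hi
        obtain ⟨m, hm, hme⟩ := stk_mem g P i hi
        have hmin := Nat.find_min hex (show m < Nat.find hex by omega)
        rw [hme, symType_inr] at hmin
        have hpH : x i = Sym.pH := by simpa using hmin
        simp [hpH]
      rw [Uwalk_succ, G.walk,
        Uinc_eat_false (by simp [hx]) (by simp [hx]) heat htop, hcP]
      simp
  | oH =>
      by_cases hex : ∃ m, symType s x (stk g P m) = true
      · have heat' : stk g P (Nat.find hex) = Sum.inl 0 := by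
          rw [eatenAt_succ, hst, stackStep_oH _ hx, dif_pos hex] at heat
          exact Option.some.inj heat
        have hspec := Nat.find_spec hex
        rw [heat', symType_inl, hs] at hspec
        cases hspec
      · rw [eatenAt_succ, hst, stackStep_oH _ hx, dif_neg hex] at heat
        cases heat

/-- If a burger of `s` strictly below the top is consumed at time `k+1`, the second
coordinate of the walk equals minus the number of such events so far. -/
lemma jevent_walk (hs : s 0 = false) {k : ℕ} {P : List ℕ} {g : ℕ → ℕ}
    (G : Good s x k P g) {j : ℕ} (hj : 1 ≤ j)
    (heat : eatenAt s x (k+1) = some (Sum.inl j)) :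
    (Uwalk s x (k+1)).2 = -(Jcount s x (k+1) : ℤ) := by
  classical
  have hst := G.stack_eq
  cases hx : x (k+1) with
  | pH => rw [eatenAt_succ, hst, stackStep_pH _ hx] at heat; cases heat
  | pC => rw [eatenAt_succ, hst, stackStep_pC _ hx] at heat; cases heat
  | oF =>
      cases P with
      | cons i P' =>
          rw [eatenAt_succ, hst, stackStep_oF _ hx] at heat
          cases heat
      | nil =>
          rw [eatenAt_succ, hst, stackStep_oF _ hx] at heat
          have : g 0 = j := by
            have := Option.some.inj heat
            injection this
          rw [G.g0] at this
          omega
  | oC =>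
      have hex : ∃ m, symType s x (stk g P m) = false :=
        ⟨P.length, by rw [stk_ge _ _ _ le_rfl, Nat.sub_self, G.g0, symType_inl]; exact hs⟩
      have heat' : stk g P (Nat.find hex) = Sum.inl j := by
        rw [eatenAt_succ, hst, stackStep_oC _ hx, dif_pos hex] at heat
        exact Option.some.inj heat
      have hle : Nat.find hex ≤ P.length := Nat.find_min' hex
        (by rw [stk_ge _ _ _ le_rfl, Nat.sub_self, G.g0, symType_inl]; exact hs)
      obtain ⟨hlen, hgj⟩ := stk_inl g P (Nat.find hex) j heat'
      have : Nat.find hex - P.length = 0 := by omega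
      rw [this, G.g0] at hgj
      omega
  | oH =>
      by_cases hex : ∃ m, symType s x (stk g P m) = true
      · have heat' : stk g P (Nat.find hex) = Sum.inl j := by
          rw [eatenAt_succ, hst, stackStep_oH _ hx, dif_pos hex] at heat
          exact Option.some.inj heat
        obtain ⟨hlen, hgj⟩ := stk_inl g P (Nat.find hex) j heat'
        have hhP : hCount x P = 0 := by
          rw [hCount, List.countP_eq_zero]
          intro i hi
          obtain ⟨m, hm, hme⟩ := stk_mem g P i hi
          have := Nat.find_min hex (show m < Nat.find hex by omega)
          rw [hme, symType_inr] at this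
          simpa using this
        have hspec := Nat.find_spec hex
        rw [heat', symType_inl] at hspec
        have hJ : Jcount s x (k+1) = Jcount s x k + 1 := Jcount_succ_event hj heat
        rw [Uwalk_succ, G.walk,
          Uinc_eat_true (by simp [hx]) (by simp [hx]) heat (by rw [symType_inl]; exact hspec),
          hhP, hJ]
        push_cast
        simp
        ring
      · rw [eatenAt_succ, hst, stackStep_oH _ hx, dif_neg hex] at heat
        cases heat

lemma oF_nil_eats_top {k : ℕ} {g : ℕ → ℕ} (G : Good s x k List.nil g)
    (hF : x (k+1) = Sym.oF) : eatenAt s x (k+1) = some (Sum.inl 0) := by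
  rw [eatenAt_succ, G.stack_eq, stackStep_oF _ hF]
  show some (Sum.inl (g 0)) = _
  rw [G.g0]

lemma oF_top_nil {k : ℕ} {P : List ℕ} {g : ℕ → ℕ} (G : Good s x k P g)
    (hF : x (k+1) = Sym.oF) (heat : eatenAt s x (k+1) = some (Sum.inl 0)) :
    P = List.nil := by
  cases P with
  | nil => rfl
  | cons i P' =>
      rw [eatenAt_succ, G.stack_eq, stackStep_oF _ hF] at heat
      cases heat

/-! ### Uniqueness of the consumption time of the top burger -/

lemma eaten_del {k : ℕ} {e : ℕ ⊕ ℕ} (h : eatenAt s x (k+1) = some e) :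
    ∃ m, stackAt s x k m = e ∧ stackAt s x (k+1) = del (stackAt s x k) m := by
  classical
  cases hx : x (k+1) with
  | pH => rw [eatenAt_succ, stackStep_pH _ hx] at h; cases h
  | pC => rw [eatenAt_succ, stackStep_pC _ hx] at h; cases h
  | oF =>
      rw [eatenAt_succ, stackStep_oF _ hx] at h
      exact ⟨0, Option.some.inj h, by rw [stackAt_succ, stackStep_oF _ hx]⟩
  | oH =>
      by_cases hex : ∃ m, symType s x (stackAt s x k m) = true
      · rw [eatenAt_succ, stackStep_oH _ hx, dif_pos hex] at h
        exact ⟨Nat.find hex, Option.some.inj h,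
          by rw [stackAt_succ, stackStep_oH _ hx, dif_pos hex]⟩
      · rw [eatenAt_succ, stackStep_oH _ hx, dif_neg hex] at h; cases h
  | oC =>
      by_cases hex : ∃ m, symType s x (stackAt s x k m) = false
      · rw [eatenAt_succ, stackStep_oC _ hx, dif_pos hex] at h
        exact ⟨Nat.find hex, Option.some.inj h,
          by rw [stackAt_succ, stackStep_oC _ hx, dif_pos hex]⟩
      · rw [eatenAt_succ, stackStep_oC _ hx, dif_neg hex] at h; cases h

lemma del_absent {st : ℕ → ℕ ⊕ ℕ} {e : ℕ ⊕ ℕ} (h : ∀ m, st m ≠ e) (m0 m : ℕ) :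
    del st m0 m ≠ e := by
  unfold del
  split
  · exact h m
  · exact h (m+1)

lemma push_absent_inl {st : ℕ → ℕ ⊕ ℕ} {j : ℕ} (h : ∀ m, st m ≠ Sum.inl j)
    (i m : ℕ) : push st i m ≠ Sum.inl j := by
  cases m with
  | zero => simp [push]
  | succ m => exact h m

lemma inl_absent_succ {k j : ℕ} (h : ∀ m, stackAt s x k m ≠ Sum.inl j) :
    ∀ m, stackAt s x (k+1) m ≠ Sum.inl j := by
  classical
  intro m
  cases hx : x (k+1) with
  | pH => rw [stackAt_succ, stackStep_pH _ hx]; exact push_absent_inl h (k+1) m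
  | pC => rw [stackAt_succ, stackStep_pC _ hx]; exact push_absent_inl h (k+1) m
  | oF => rw [stackAt_succ, stackStep_oF _ hx]; exact del_absent h 0 m
  | oH =>
      by_cases hex : ∃ m, symType s x (stackAt s x k m) = true
      · rw [stackAt_succ, stackStep_oH _ hx, dif_pos hex]; exact del_absent h (Nat.find hex) m
      · rw [stackAt_succ, stackStep_oH _ hx, dif_neg hex]; exact h m
  | oC =>
      by_cases hex : ∃ m, symType s x (stackAt s x k m) = false
      · rw [stackAt_succ, stackStep_oC _ hx, dif_pos hex]; exact del_absent h (Nat.find hex) m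
      · rw [stackAt_succ, stackStep_oC _ hx, dif_neg hex]; exact h m

lemma inl_absent_mono {k l j : ℕ} (hkl : k ≤ l)
    (h : ∀ m, stackAt s x k m ≠ Sum.inl j) :
    ∀ m, stackAt s x l m ≠ Sum.inl j := by
  induction l with
  | zero =>
      have : k = 0 := by omega
      subst this; exact h
  | succ l ih =>
      rcases Nat.lt_or_ge k (l+1) with hlt | hge
      · exact inl_absent_succ (ih (by omega))
      · have : k = l + 1 := by omega
        subst this; exact h

lemma first_eaten_absent (hs : s 0 = false) {t0 : ℕ}
    (hfirst : ∀ t, t < t0 → eatenAt s x t ≠ some (Sum.inl 0))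
    (heat : eatenAt s x t0 = some (Sum.inl 0)) :
    ∀ m, stackAt s x t0 m ≠ Sum.inl 0 := by
  cases t0 with
  | zero => rw [eatenAt_zero] at heat; cases heat
  | succ k =>
      obtain ⟨P, g, G⟩ := good_upto hs k (fun t ht => hfirst t (by omega))
      obtain ⟨m0, hm0, hdel⟩ := eaten_del heat
      have hm0len : m0 = P.length := by
        apply stk_eq_inl_zero G.smono G.g0
        rw [← G.stack_eq]; exact hm0
      intro m
      rw [hdel]
      unfold del
      split
      · rw [G.stack_eq]
        intro hc
        have := stk_eq_inl_zero G.smono G.g0 hc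
        omega
      · rw [G.stack_eq]
        intro hc
        have := stk_eq_inl_zero G.smono G.g0 hc
        omega

lemma eaten_unique (hs : s 0 = false) (h0 : ∃ t, eatenAt s x t = some (Sum.inl 0)) :
    ∀ t, eatenAt s x t = some (Sum.inl 0) → t = Nat.find h0 := by
  intro t ht
  have hle : Nat.find h0 ≤ t := Nat.find_min' h0 ht
  rcases eq_or_lt_of_le hle with heq | hlt
  · exact heq.symm
  · exfalso
    have habs := first_eaten_absent hs (fun u hu => Nat.find_min h0 hu) (Nat.find_spec h0)
    have habs' := inl_absent_mono (show Nat.find h0 ≤ t - 1 by omega) habs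
    obtain ⟨m, hm, _⟩ := eaten_del
      (show eatenAt s x ((t-1)+1) = some (Sum.inl 0) by
        rw [show t - 1 + 1 = t by omega]; exact ht)
    exact habs' m hm

/-- If the walk's second coordinate stays `≥ -n` then at most `n` burgers of `s`
strictly below the top have been consumed. -/
lemma Jcount_le_of_cone (hs : s 0 = false) {K n : ℕ}
    (hreg : ∀ t, t ≤ K → eatenAt s x t ≠ some (Sum.inl 0))
    (hcone : ∀ t, 1 ≤ t → t ≤ K → -(n:ℤ) ≤ (Uwalk s x t).2) :
    Jcount s x K ≤ n := by
  classical
  induction K with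
  | zero => simp [Jcount_zero]
  | succ k ih =>
      by_cases hev : ∃ j, 1 ≤ j ∧ eatenAt s x (k+1) = some (Sum.inl j)
      · obtain ⟨j, hj, he⟩ := hev
        obtain ⟨P, g, G⟩ := good_upto hs k (fun t ht => hreg t (by omega))
        have hw := jevent_walk hs G hj he
        have hc := hcone (k+1) (by omega) le_rfl
        rw [hw] at hc
        omega
      · rw [Jcount_succ, if_neg hev, add_zero]
        exact ih (fun t ht => hreg t (by omega)) (fun t h1 h2 => hcone t h1 (by omega))

end FKPaper

namespace FKPaper

variable {p : ℝ} {s : ℕ → Bool} {x : ℕ → Sym}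

lemma Lam_zero : Lam p (0 : ℤ × ℤ) = 0 := by
  apply Complex.ext
  · rw [Lam_re]; simp
  · rw [Lam_im]; simp

lemma Lam_neg (u : ℤ × ℤ) : Lam p (-u) = -Lam p u := by
  have h : Lam p u + Lam p (-u) = 0 := by
    rw [← Lam_add, add_neg_cancel, Lam_zero]
  exact eq_neg_of_add_eq_zero_right h

lemma Vwalk_mem_coneCn_iff (hp : p ∈ Set.Ioo (0:ℝ) (1/2)) (n k : ℕ) :
    Vwalk p s x k ∈ coneCn p n ↔
      0 ≤ (Uwalk s x k).1 ∧ -(n:ℤ) ≤ (Uwalk s x k).2 := by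
  show Vwalk p s x k + (n : ℂ) * vZero p ∈ coneC (theta0 p) ↔ _
  have hV : Vwalk p s x k = Lam p (Uwalk s x k) := rfl
  rw [hV, nsmul_vZero, ← Lam_add, Lam_mem_coneC_iff hp]
  have h1 : (Uwalk s x k + ((0:ℤ), (n:ℤ))).1 = (Uwalk s x k).1 := by simp
  have h2 : (Uwalk s x k + ((0:ℤ), (n:ℤ))).2 = (Uwalk s x k).2 + n := by simp
  rw [h1, h2]
  omega

lemma Vwalk_tip_iff (hp : p ∈ Set.Ioo (0:ℝ) (1/2)) (n k : ℕ) :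
    Vwalk p s x k = -((n:ℂ) * vZero p) ↔ Uwalk s x k = ((0:ℤ), -(n:ℤ)) := by
  have hV : Vwalk p s x k = Lam p (Uwalk s x k) := rfl
  have hneg : -((n:ℂ) * vZero p) = Lam p ((0:ℤ), -(n:ℤ)) := by
    rw [nsmul_vZero, ← Lam_neg]
    norm_num
  rw [hV, hneg]
  constructor
  · exact fun h => Lam_inj hp h
  · exact fun h => by rw [h]

end FKPaper

open FKPaper in
/-- Lemma `prop:same_event`: for every infinite burger stack `s`, all
integers `n, m ≥ 1` and every realisation of the symbol sequence, the events
`{top burger of s is a cheeseburger} ∩ {T > m², |J_T| = n} ∩ E` and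
`E*_n ∩ {T*_{θ0,n} > m²}` coincide. -/
theorem fk_same_event (p : ℝ) (hp : p ∈ Set.Ioo (0:ℝ) (1/2))
    (s : ℕ → Bool) (n m : ℕ) (hn : 1 ≤ n) (hm : 1 ≤ m) (x : ℕ → Sym) :
    (s 0 = false ∧ (((m^2 : ℕ) : ℕ∞) < hitT s x ∧ JT s x = n) ∧ Eev s x)
      ↔ (EstarN p s x n ∧ ((m^2 : ℕ) : ℕ∞) < TstarN p s x n) := by
  classical
  constructor
  · rintro ⟨hsf, ⟨hT, hJ⟩, ke, hke, hkF⟩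
    have h0 : ∃ t, eatenAt s x t = some (Sum.inl 0) := ⟨ke, hke⟩
    set k0 := Nat.find h0 with hk0def
    have hkek0 : ke = k0 := eaten_unique hsf h0 ke hke
    have hk0e : eatenAt s x k0 = some (Sum.inl 0) := Nat.find_spec h0
    have hxk0 : x k0 = Sym.oF := by rw [← hkek0]; exact hkF
    have hTval : hitT s x = (k0 : ℕ∞) := by unfold hitT; rw [dif_pos h0]
    rw [hTval] at hT
    have hm2k0 : m^2 < k0 := by exact_mod_cast hT
    have hk0pos : 1 ≤ k0 := by
      rcases Nat.eq_zero_or_pos k0 with h | h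
      · rw [h, eatenAt_zero] at hk0e; cases hk0e
      · exact h
    set K := k0 - 1 with hKdef
    have hK1 : k0 = K + 1 := by omega
    have hreg : ∀ t, t ≤ K → eatenAt s x t ≠ some (Sum.inl 0) := fun t ht =>
      Nat.find_min h0 (by omega)
    obtain ⟨P, g, G⟩ := good_upto hsf K hreg
    have hPnil : P = List.nil :=
      oF_top_nil G (by rw [← hK1]; exact hxk0) (by rw [← hK1]; exact hk0e)
    subst hPnil
    have hJval : JT s x = Jcount s x k0 := by unfold JT Jcount; rw [dif_pos h0]
    have hJK : Jcount s x k0 = Jcount s x K := by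
      rw [hK1]
      apply Jcount_succ_none
      intro j hj hee
      rw [← hK1] at hee
      have := hk0e.symm.trans hee
      have : (Sum.inl 0 : ℕ ⊕ ℕ) = Sum.inl j := by injection this
      have : (0:ℕ) = j := by injection this
      omega
    have hJn : Jcount s x K = n := by
      rw [hJval, hJK] at hJ; exact hJ
    have hUK : Uwalk s x K = ((0:ℤ), -(n:ℤ)) := by
      rw [G.walk, hJn]
      have h1 : cCount x List.nil = 0 := rfl
      have h2 : hCount x List.nil = 0 := rfl
      rw [h1, h2]
      apply Prod.ext <;> simp
    have hUk0 : Uwalk s x k0 = ((-1:ℤ), -(n:ℤ)) := by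
      rw [hK1, Uwalk_succ, hUK,
        Uinc_eat_false (by simp [← hK1, hxk0]) (by simp [← hK1, hxk0])
          (by rw [← hK1]; exact hk0e) (by rw [symType_inl]; exact hsf)]
      apply Prod.ext <;> simp
    have hexit : Vwalk p s x k0 ∉ coneCn p n := by
      rw [Vwalk_mem_coneCn_iff hp, hUk0]
      simp
    have hint : ∀ t, 1 ≤ t → t < k0 → Vwalk p s x t ∈ coneCn p n := by
      intro t h1 h2
      obtain ⟨Q, gq, Gq⟩ := good_upto hsf t (fun u hu => hreg u (by omega))
      rw [Vwalk_mem_coneCn_iff hp, Gq.walk]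
      have hJt : Jcount s x t ≤ n := by
        rw [← hJn]; exact Jcount_mono (by omega)
      constructor
      · simp
      · simp only
        omega
    have htip : Vwalk p s x K = -((n:ℂ) * vZero p) := (Vwalk_tip_iff hp n K).mpr hUK
    refine ⟨⟨hsf, k0, hk0pos, hexit, hint, htip, hxk0⟩, ?_⟩
    have h1 : ∃ t, 1 ≤ t ∧ Vwalk p s x t ∉ coneCn p n := ⟨k0, hk0pos, hexit⟩
    have hfind : Nat.find h1 = k0 := by
      apply le_antisymm (Nat.find_min' h1 ⟨hk0pos, hexit⟩)
      by_contra h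
      push_neg at h
      obtain ⟨hf1, hf2⟩ := Nat.find_spec h1
      exact hf2 (hint _ hf1 (by omega))
    unfold TstarN
    rw [dif_pos h1, hfind]
    exact_mod_cast hm2k0
  · rintro ⟨⟨hsf, k, hk1, hexit, hint, htip, hkF⟩, hTs⟩
    have h1 : ∃ t, 1 ≤ t ∧ Vwalk p s x t ∉ coneCn p n := ⟨k, hk1, hexit⟩
    have hfind : Nat.find h1 = k := by
      apply le_antisymm (Nat.find_min' h1 ⟨hk1, hexit⟩)
      by_contra h
      push_neg at h
      obtain ⟨hf1, hf2⟩ := Nat.find_spec h1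
      exact hf2 (hint _ hf1 (by omega))
    rw [TstarN, dif_pos h1, hfind] at hTs
    have hm2k : m^2 < k := by exact_mod_cast hTs
    set K := k - 1 with hKdef
    have hK1 : k = K + 1 := by omega
    have hreg : ∀ t, t ≤ K → eatenAt s x t ≠ some (Sum.inl 0) := by
      intro t ht heat
      have h0' : ∃ u, eatenAt s x u = some (Sum.inl 0) := ⟨t, heat⟩
      set t0 := Nat.find h0' with ht0def
      have ht0le : t0 ≤ t := Nat.find_min' h0' heat
      have ht0pos : 1 ≤ t0 := by
        rcases Nat.eq_zero_or_pos t0 with h | h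
        · have := Nat.find_spec h0'
          rw [← ht0def, h, eatenAt_zero] at this
          cases this
        · exact h
      obtain ⟨Q, gq, Gq⟩ :=
        good_upto hsf (t0 - 1) (fun u hu => Nat.find_min h0' (by omega))
      have hwalk1 := eat_top_walk hsf Gq
        (by rw [show t0 - 1 + 1 = t0 by omega]; exact Nat.find_spec h0')
      rw [show t0 - 1 + 1 = t0 by omega] at hwalk1
      have hmem := hint t0 ht0pos (by omega)
      rw [Vwalk_mem_coneCn_iff hp] at hmem
      omega
    obtain ⟨P, g, G⟩ := good_upto hsf K hreg
    have hUK : Uwalk s x K = ((0:ℤ), -(n:ℤ)) := (Vwalk_tip_iff hp n K).mp htip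
    have hcone : ∀ t, 1 ≤ t → t ≤ K → -(n:ℤ) ≤ (Uwalk s x t).2 := by
      intro t h1' h2'
      have := hint t h1' (by omega)
      rw [Vwalk_mem_coneCn_iff hp] at this
      exact this.2
    have hJle : Jcount s x K ≤ n := Jcount_le_of_cone hsf hreg hcone
    have hw := G.walk
    rw [hUK] at hw
    have e1 : (0:ℤ) = (cCount x P : ℤ) := congrArg Prod.fst hw
    have e2 : -(n:ℤ) = (hCount x P : ℤ) - (Jcount s x K : ℤ) := congrArg Prod.snd hw
    have hcC : cCount x P = 0 := by omega
    have hhC : hCount x P = 0 := by omega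
    have hJn : Jcount s x K = n := by omega
    have hPnil : P = List.nil := by
      cases P with
      | nil => rfl
      | cons i P' =>
          exfalso
          rcases G.prodP i (List.mem_cons_self) with h | h
          · rw [hCount, List.countP_cons] at hhC
            simp [h] at hhC
          · rw [cCount, List.countP_cons] at hcC
            simp [h] at hcC
    subst hPnil
    have heatk : eatenAt s x k = some (Sum.inl 0) := by
      rw [hK1]
      exact oF_nil_eats_top G (by rw [← hK1]; exact hkF)
    have h0 : ∃ t, eatenAt s x t = some (Sum.inl 0) := ⟨k, heatk⟩
    have hfind0 : Nat.find h0 = k := by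
      apply le_antisymm (Nat.find_min' h0 heatk)
      by_contra h
      push_neg at h
      exact hreg _ (by omega) (Nat.find_spec h0)
    refine ⟨hsf, ⟨?_, ?_⟩, ⟨k, heatk, hkF⟩⟩
    · unfold hitT
      rw [dif_pos h0, hfind0]
      exact_mod_cast hm2k
    · have hJval : JT s x = Jcount s x k := by
        unfold JT Jcount; rw [dif_pos h0, hfind0]
      rw [hJval, hK1]
      rw [Jcount_succ_none (fun j hj hee => by
        rw [← hK1] at hee
        have h' := heatk.symm.trans hee
        have h'' : (Sum.inl 0 : ℕ ⊕ ℕ) = Sum.inl j := by injection h'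
        have : (0:ℕ) = j := by injection h''
        omega)]
      exact hJn
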